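/- Let A be a symmetric invertible p_γ × p_γ real matrix and B a p_γ × p_θ real matrix; fix θ ∈ ℝ^{p_θ}. On a probability space, let β̂ = (γ̂, θ̂) be a random vector in ℝ^{p} (p = p_γ + p_θ) with square-integrable components, mean β̃ = (γ̃, θ̃) and covariance matrix whose θ-block is K̃_{θθ}; let ε be a random vector in ℝ^{p_γ}, independent of β̂, with square-integrable components, mean zero, and covariance matrix A⁻¹; and set γ = γ̂ + A⁻¹ B (θ̂ − θ) + ε, β = (γ, θ). Then E[ ‖β − β̂‖² ] = (θ − θ̃)ᵀ S (θ − θ̃) + tr(A⁻¹) + tr(S K̃_{θθ}), where S = I_{p_θ} + Bᵀ A⁻¹ A⁻¹ B and ‖·‖ denotes the Euclidean norm on ℝ^p. -/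

import Mathlib

open MeasureTheory ProbabilityTheory Matrix

lemma l2mul {Ω : Type*} [MeasurableSpace Ω] {P : Measure Ω} {f g : Ω → ℝ}
    (hf : MemLp f 2 P) (hg : MemLp g 2 P) :
    Integrable (fun ω => f ω * g ω) P := by
  have h : MemLp (g • f) 1 P := hf.smul hg
  rw [← memLp_one_iff_integrable]
  have h' : MemLp (f * g) 1 P := by simpa [smul_eq_mul, mul_comm, Pi.smul_apply'] using h
  exact h'

/-- The generator squared error entry of Table 2:
E[‖β − β̂‖²] = (θ − θ̃)ᵀ S (θ − θ̃) + tr(A⁻¹) + tr(S K̃_{θθ}),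
where S = I + Bᵀ A⁻¹ A⁻¹ B, β̂ = (γ̂, θ̂) has mean β̃ = (γ̃, θ̃) and covariance
whose θ-block is K̃_{θθ}, and γ = γ̂ + A⁻¹ B (θ̂ − θ) + ε with ε independent of β̂,
mean 0, covariance A⁻¹; the squared Euclidean norm is written as the dot
product of a vector with itself. -/
theorem expected_generator_squared_error
    {Ω : Type*} [MeasurableSpace Ω] (P : Measure Ω) [IsProbabilityMeasure P]
    {pγ pθ : ℕ}
    (A : Matrix (Fin pγ) (Fin pγ) ℝ) (hA : A.IsSymm) (hAdet : IsUnit A.det)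
    (B : Matrix (Fin pγ) (Fin pθ) ℝ)
    (θ : Fin pθ → ℝ)
    (βhat : Ω → (Fin pγ ⊕ Fin pθ → ℝ)) (hβhatMeas : Measurable βhat)
    (hβhatL2 : ∀ i, MemLp (fun ω => βhat ω i) 2 P)
    (γtilde : Fin pγ → ℝ) (θtilde : Fin pθ → ℝ)
    (hβhatMean : ∀ i, ∫ ω, βhat ω i ∂P = Sum.elim γtilde θtilde i)
    (Ktilde : Matrix (Fin pγ ⊕ Fin pθ) (Fin pγ ⊕ Fin pθ) ℝ)
    (hβhatCov : ∀ i j, ∫ ω, (βhat ω i - Sum.elim γtilde θtilde i)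
        * (βhat ω j - Sum.elim γtilde θtilde j) ∂P = Ktilde i j)
    (ε : Ω → (Fin pγ → ℝ)) (hεMeas : Measurable ε)
    (hεL2 : ∀ i, MemLp (fun ω => ε ω i) 2 P)
    (hεMean : ∀ i, ∫ ω, ε ω i ∂P = 0)
    (hεCov : ∀ i j, ∫ ω, ε ω i * ε ω j ∂P = A⁻¹ i j)
    (hIndep : IndepFun βhat ε P)
    (γ : Ω → (Fin pγ → ℝ))
    (hγ : ∀ ω, γ ω = (fun i => βhat ω (Sum.inl i))
        + A⁻¹.mulVec (B.mulVec ((fun j => βhat ω (Sum.inr j)) - θ)) + ε ω) :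
    ∫ ω, (Sum.elim (γ ω) θ - βhat ω) ⬝ᵥ (Sum.elim (γ ω) θ - βhat ω) ∂P
      = (θ - θtilde) ⬝ᵥ
          ((1 : Matrix (Fin pθ) (Fin pθ) ℝ) + Bᵀ * A⁻¹ * A⁻¹ * B).mulVec (θ - θtilde)
        + (A⁻¹).trace
        + (((1 : Matrix (Fin pθ) (Fin pθ) ℝ) + Bᵀ * A⁻¹ * A⁻¹ * B)
            * Ktilde.toBlocks₂₂).trace := by
  classical
  set M : Matrix (Fin pγ) (Fin pθ) ℝ := A⁻¹ * B with hMdef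
  set t : Fin pθ → ℝ := fun j => θtilde j - θ j with htdef
  set δ : Ω → Fin pθ → ℝ := fun ω j => βhat ω (Sum.inr j) - θ j with hδdef
  -- integrability facts
  have hδL2 : ∀ j, MemLp (fun ω => δ ω j) 2 P := fun j =>
    (hβhatL2 (Sum.inr j)).sub (memLp_const (θ j))
  have hβint : ∀ i, Integrable (fun ω => βhat ω i) P :=
    fun i => (hβhatL2 i).integrable one_le_two
  have hδmean : ∀ j, ∫ ω, δ ω j ∂P = t j := by
    intro j
    simp only [hδdef]
    rw [integral_sub (hβint _) (integrable_const _)]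
    simp [hβhatMean (Sum.inr j), htdef]
  have hδδint : ∀ j k, Integrable (fun ω => δ ω j * δ ω k) P :=
    fun j k => l2mul (hδL2 j) (hδL2 k)
  have hεεint : ∀ i k, Integrable (fun ω => ε ω i * ε ω k) P :=
    fun i k => l2mul (hεL2 i) (hεL2 k)
  have hδεint : ∀ j i, Integrable (fun ω => δ ω j * ε ω i) P :=
    fun j i => l2mul (hδL2 j) (hεL2 i)
  -- second moments of δ
  have hδδ : ∀ j k, ∫ ω, δ ω j * δ ω k ∂P
      = Ktilde (Sum.inr j) (Sum.inr k) + t j * t k := by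
    intro j k
    have hX : ∀ i, MemLp (fun ω => βhat ω i - Sum.elim γtilde θtilde i) 2 P := fun i =>
      (hβhatL2 i).sub (memLp_const _)
    have hXint : ∀ i, Integrable (fun ω => βhat ω i - Sum.elim γtilde θtilde i) P :=
      fun i => (hX i).integrable one_le_two
    have hXmean : ∀ i, ∫ ω, (βhat ω i - Sum.elim γtilde θtilde i) ∂P = 0 := by
      intro i; rw [integral_sub (hβint i) (integrable_const _)]; simp [hβhatMean i]
    have key : (fun ω => δ ω j * δ ω k)
        = fun ω =>
          ((βhat ω (Sum.inr j) - Sum.elim γtilde θtilde (Sum.inr j))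
              * (βhat ω (Sum.inr k) - Sum.elim γtilde θtilde (Sum.inr k))
            + t j * (βhat ω (Sum.inr k) - Sum.elim γtilde θtilde (Sum.inr k)))
          + (t k * (βhat ω (Sum.inr j) - Sum.elim γtilde θtilde (Sum.inr j))
            + t j * t k) := by
      funext ω; simp only [hδdef, Sum.elim_inr, htdef]; ring
    have h1 : Integrable (fun ω =>
        (βhat ω (Sum.inr j) - Sum.elim γtilde θtilde (Sum.inr j))
          * (βhat ω (Sum.inr k) - Sum.elim γtilde θtilde (Sum.inr k))) P :=
      l2mul (hX _) (hX _)
    have h2 : Integrable (fun ω =>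
        t j * (βhat ω (Sum.inr k) - Sum.elim γtilde θtilde (Sum.inr k))) P :=
      (hXint _).const_mul _
    have h3 : Integrable (fun ω =>
        t k * (βhat ω (Sum.inr j) - Sum.elim γtilde θtilde (Sum.inr j))) P :=
      (hXint _).const_mul _
    have h12 : Integrable (fun ω =>
        (βhat ω (Sum.inr j) - Sum.elim γtilde θtilde (Sum.inr j))
          * (βhat ω (Sum.inr k) - Sum.elim γtilde θtilde (Sum.inr k))
        + t j * (βhat ω (Sum.inr k) - Sum.elim γtilde θtilde (Sum.inr k))) P :=
      h1.add h2
    have h34 : Integrable (fun ω =>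
        t k * (βhat ω (Sum.inr j) - Sum.elim γtilde θtilde (Sum.inr j)) + t j * t k) P :=
      h3.add (integrable_const _)
    rw [key, integral_add h12 h34, integral_add h1 h2, integral_add h3 (integrable_const _),
      integral_const_mul _ _, integral_const_mul _ _, hXmean, hXmean, hβhatCov]
    simp
  -- mixed moments vanish
  have hδε : ∀ j i, ∫ ω, δ ω j * ε ω i ∂P = 0 := by
    intro j i
    have hind : IndepFun (fun ω => δ ω j) (fun ω => ε ω i) P := by
      have h := hIndep.comp (φ := fun v : Fin pγ ⊕ Fin pθ → ℝ => v (Sum.inr j) - θ j)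
        (ψ := fun v : Fin pγ → ℝ => v i)
        ((measurable_pi_apply (X := fun _ : Fin pγ ⊕ Fin pθ => ℝ) (Sum.inr j)).sub measurable_const) (measurable_pi_apply (X := fun _ : Fin pγ => ℝ) i)
      exact h
    rw [hind.integral_fun_mul_eq_mul_integral (hδL2 j).aestronglyMeasurable (hεL2 i).aestronglyMeasurable,
      hδmean j, hεMean i, mul_zero]
  -- pointwise identity for the integrand
  have hpt : ∀ ω, (Sum.elim (γ ω) θ - βhat ω) ⬝ᵥ (Sum.elim (γ ω) θ - βhat ω)
      = (∑ i, ∑ j, ∑ k, M i j * M i k * (δ ω j * δ ω k))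
        + (∑ i, ∑ j, (2 * M i j) * (δ ω j * ε ω i))
        + (∑ i, ε ω i * ε ω i)
        + (∑ j, δ ω j * δ ω j) := by
    intro ω
    have hvec : ((fun j => βhat ω (Sum.inr j)) - θ) = δ ω := by
      funext j; simp [hδdef]
    have h1 : ∀ i, (Sum.elim (γ ω) θ - βhat ω) (Sum.inl i)
        = (∑ j, M i j * δ ω j) + ε ω i := by
      intro i
      simp only [Pi.sub_apply, Sum.elim_inl, hγ ω, Pi.add_apply, hvec, mulVec_mulVec,
        ← hMdef]
      simp only [Matrix.mulVec, dotProduct]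
      ring
    have h2 : ∀ j, (Sum.elim (γ ω) θ - βhat ω) (Sum.inr j) = -(δ ω j) := by
      intro j
      simp only [Pi.sub_apply, Sum.elim_inr, hδdef]
      ring
    have hdot : (Sum.elim (γ ω) θ - βhat ω) ⬝ᵥ (Sum.elim (γ ω) θ - βhat ω)
        = ∑ x, (Sum.elim (γ ω) θ - βhat ω) x * (Sum.elim (γ ω) θ - βhat ω) x := rfl
    rw [hdot, Fintype.sum_sum_type]
    have hl : ∀ i, (Sum.elim (γ ω) θ - βhat ω) (Sum.inl i)
          * (Sum.elim (γ ω) θ - βhat ω) (Sum.inl i)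
        = (∑ j, ∑ k, M i j * M i k * (δ ω j * δ ω k))
          + (∑ j, (2 * M i j) * (δ ω j * ε ω i)) + ε ω i * ε ω i := by
      intro i
      rw [h1 i]
      have hsq : (∑ j, M i j * δ ω j) * (∑ j, M i j * δ ω j)
          = ∑ j, ∑ k, M i j * M i k * (δ ω j * δ ω k) := by
        rw [Finset.sum_mul_sum]
        exact Finset.sum_congr rfl fun j _ => Finset.sum_congr rfl fun k _ => by ring
      have hcr : 2 * ((∑ j, M i j * δ ω j) * ε ω i)
          = ∑ j, (2 * M i j) * (δ ω j * ε ω i) := by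
        rw [Finset.sum_mul, Finset.mul_sum]
        exact Finset.sum_congr rfl fun j _ => by ring
      have hexp : ((∑ j, M i j * δ ω j) + ε ω i) * ((∑ j, M i j * δ ω j) + ε ω i)
          = (∑ j, M i j * δ ω j) * (∑ j, M i j * δ ω j)
            + 2 * ((∑ j, M i j * δ ω j) * ε ω i) + ε ω i * ε ω i := by ring
      rw [hexp, hsq, hcr]
    have hr : ∀ j, (Sum.elim (γ ω) θ - βhat ω) (Sum.inr j)
          * (Sum.elim (γ ω) θ - βhat ω) (Sum.inr j) = δ ω j * δ ω j := by
      intro j; rw [h2 j]; ring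
    rw [Finset.sum_congr rfl fun i _ => hl i, Finset.sum_congr rfl fun j _ => hr j,
      Finset.sum_add_distrib, Finset.sum_add_distrib]
  -- integrate
  have hI1 : Integrable (fun ω => ∑ i, ∑ j, ∑ k, M i j * M i k * (δ ω j * δ ω k)) P :=
    integrable_finset_sum _ fun i _ => integrable_finset_sum _ fun j _ =>
      integrable_finset_sum _ fun k _ => (hδδint j k).const_mul _
  have hI2 : Integrable (fun ω => ∑ i, ∑ j, (2 * M i j) * (δ ω j * ε ω i)) P :=
    integrable_finset_sum _ fun i _ => integrable_finset_sum _ fun j _ =>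
      (hδεint j i).const_mul _
  have hI3 : Integrable (fun ω => ∑ i, ε ω i * ε ω i) P :=
    integrable_finset_sum _ fun i _ => hεεint i i
  have hI4 : Integrable (fun ω => ∑ j, δ ω j * δ ω j) P :=
    integrable_finset_sum _ fun j _ => hδδint j j
  have hI12 : Integrable (fun ω =>
      (∑ i, ∑ j, ∑ k, M i j * M i k * (δ ω j * δ ω k))
      + (∑ i, ∑ j, (2 * M i j) * (δ ω j * ε ω i))) P := hI1.add hI2
  have hI123 : Integrable (fun ω =>
      (∑ i, ∑ j, ∑ k, M i j * M i k * (δ ω j * δ ω k))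
      + (∑ i, ∑ j, (2 * M i j) * (δ ω j * ε ω i))
      + (∑ i, ε ω i * ε ω i)) P := hI12.add hI3
  have hmain : ∫ ω, (Sum.elim (γ ω) θ - βhat ω) ⬝ᵥ (Sum.elim (γ ω) θ - βhat ω) ∂P
      = (∑ i : Fin pγ, ∑ j, ∑ k, M i j * M i k * (Ktilde (Sum.inr j) (Sum.inr k) + t j * t k))
        + (∑ i : Fin pγ, A⁻¹ i i)
        + (∑ j, (Ktilde (Sum.inr j) (Sum.inr j) + t j * t j)) := by
    rw [integral_congr_ae (Filter.Eventually.of_forall hpt),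
      integral_add hI123 hI4, integral_add hI12 hI3, integral_add hI1 hI2]
    have e1 : ∫ ω, (∑ i, ∑ j, ∑ k, M i j * M i k * (δ ω j * δ ω k)) ∂P
        = ∑ i : Fin pγ, ∑ j, ∑ k, M i j * M i k * (Ktilde (Sum.inr j) (Sum.inr k) + t j * t k) := by
      rw [integral_finset_sum _ fun i _ => integrable_finset_sum _ fun j _ =>
        integrable_finset_sum _ fun k _ => (hδδint j k).const_mul _]
      refine Finset.sum_congr rfl fun i _ => ?_
      rw [integral_finset_sum _ fun j _ => integrable_finset_sum _ fun k _ =>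
        (hδδint j k).const_mul _]
      refine Finset.sum_congr rfl fun j _ => ?_
      rw [integral_finset_sum _ fun k _ => (hδδint j k).const_mul _]
      exact Finset.sum_congr rfl fun k _ => by rw [integral_const_mul _ _, hδδ]
    have e2 : ∫ ω, (∑ i, ∑ j, (2 * M i j) * (δ ω j * ε ω i)) ∂P = 0 := by
      rw [integral_finset_sum _ fun i _ => integrable_finset_sum _ fun j _ =>
        (hδεint j i).const_mul _]
      refine Finset.sum_eq_zero fun i _ => ?_
      rw [integral_finset_sum _ fun j _ => (hδεint j i).const_mul _]
      exact Finset.sum_eq_zero fun j _ => by rw [integral_const_mul _ _, hδε, mul_zero]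
    have e3 : ∫ ω, (∑ i, ε ω i * ε ω i) ∂P = ∑ i : Fin pγ, A⁻¹ i i := by
      rw [integral_finset_sum _ fun i _ => hεεint i i]
      exact Finset.sum_congr rfl fun i _ => hεCov i i
    have e4 : ∫ ω, (∑ j, δ ω j * δ ω j) ∂P
        = ∑ j, (Ktilde (Sum.inr j) (Sum.inr j) + t j * t j) := by
      rw [integral_finset_sum _ fun j _ => hδδint j j]
      exact Finset.sum_congr rfl fun j _ => hδδ j j
    rw [e1, e2, e3, e4]; ring
  rw [hmain]
  -- now pure algebra
  have hKsymm : ∀ j k : Fin pθ, Ktilde (Sum.inr k) (Sum.inr j)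
      = Ktilde (Sum.inr j) (Sum.inr k) := by
    intro j k
    rw [← hβhatCov, ← hβhatCov]
    exact integral_congr_ae (Filter.Eventually.of_forall fun ω => mul_comm _ _)
  have hMT : Bᵀ * A⁻¹ * A⁻¹ * B = Mᵀ * M := by
    rw [hMdef, Matrix.transpose_mul, Matrix.transpose_nonsing_inv, hA.eq,
      Matrix.mul_assoc (Bᵀ * A⁻¹) A⁻¹ B]
  have hSapp : ∀ j k, ((1 : Matrix (Fin pθ) (Fin pθ) ℝ) + Bᵀ * A⁻¹ * A⁻¹ * B) j k
      = (if j = k then (1:ℝ) else 0) + ∑ i, M i j * M i k := by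
    intro j k
    rw [hMT]
    simp [Matrix.add_apply, Matrix.one_apply, Matrix.mul_apply, Matrix.transpose_apply]
  have hRHS1 : (θ - θtilde) ⬝ᵥ
      ((1 : Matrix (Fin pθ) (Fin pθ) ℝ) + Bᵀ * A⁻¹ * A⁻¹ * B).mulVec (θ - θtilde)
      = ∑ j, ∑ k, ((if j = k then (1:ℝ) else 0) + ∑ i, M i j * M i k) * (t j * t k) := by
    simp only [dotProduct, Matrix.mulVec, Finset.mul_sum, Pi.sub_apply]
    refine Finset.sum_congr rfl fun j _ => Finset.sum_congr rfl fun k _ => ?_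
    rw [hSapp j k]
    simp only [htdef]; ring
  have hRHS3 : (((1 : Matrix (Fin pθ) (Fin pθ) ℝ) + Bᵀ * A⁻¹ * A⁻¹ * B)
        * Ktilde.toBlocks₂₂).trace
      = ∑ j, ∑ k, ((if j = k then (1:ℝ) else 0) + ∑ i, M i j * M i k)
          * Ktilde (Sum.inr j) (Sum.inr k) := by
    simp only [Matrix.trace, Matrix.diag, Matrix.mul_apply]
    refine Finset.sum_congr rfl fun j _ => Finset.sum_congr rfl fun k _ => ?_
    rw [hSapp j k, show Ktilde.toBlocks₂₂ k j = Ktilde (Sum.inr k) (Sum.inr j) from rfl,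
      hKsymm j k]
  have hTr : (A⁻¹).trace = ∑ i : Fin pγ, A⁻¹ i i := rfl
  rw [hRHS1, hRHS3, hTr]
  -- final sum manipulation
  have lhs1 : (∑ i : Fin pγ, ∑ j, ∑ k, M i j * M i k * (Ktilde (Sum.inr j) (Sum.inr k) + t j * t k))
      = ∑ j, ∑ k, (∑ i, M i j * M i k) * (Ktilde (Sum.inr j) (Sum.inr k) + t j * t k) := by
    rw [Finset.sum_comm]
    refine Finset.sum_congr rfl fun j _ => ?_
    rw [Finset.sum_comm]
    exact Finset.sum_congr rfl fun k _ => (Finset.sum_mul _ _ _).symm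
  have lhs2 : (∑ j, (Ktilde (Sum.inr j) (Sum.inr j) + t j * t j))
      = ∑ j, ∑ k, (if j = k then (1:ℝ) else 0)
          * (Ktilde (Sum.inr j) (Sum.inr k) + t j * t k) := by
    refine Finset.sum_congr rfl fun j _ => ?_
    simp [ite_mul]
  rw [lhs1, lhs2]
  have final : (∑ j, ∑ k, (∑ i, M i j * M i k) * (Ktilde (Sum.inr j) (Sum.inr k) + t j * t k))
      + (∑ j, ∑ k, (if j = k then (1:ℝ) else 0) * (Ktilde (Sum.inr j) (Sum.inr k) + t j * t k))
      = (∑ j, ∑ k, ((if j = k then (1:ℝ) else 0) + ∑ i, M i j * M i k) * (t j * t k))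
        + (∑ j, ∑ k, ((if j = k then (1:ℝ) else 0) + ∑ i, M i j * M i k)
            * Ktilde (Sum.inr j) (Sum.inr k)) := by
    rw [← Finset.sum_add_distrib, ← Finset.sum_add_distrib]
    refine Finset.sum_congr rfl fun j _ => ?_
    rw [← Finset.sum_add_distrib, ← Finset.sum_add_distrib]
    refine Finset.sum_congr rfl fun k _ => ?_
    ring
  linarith [final]
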